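/- The Algorithm-B distribution with scores q and rate λ is equal, as a probability distribution on Fin k, to the report-noisy-max-with-exponential-noise distribution with the same scores q and rate λ. -/

import Mathlib

open MeasureTheory ProbabilityTheory Real
open scoped ENNReal


lemma expMeasure_Iic {r : ℝ} (hr : 0 < r) (t : ℝ) :
    expMeasure r (Set.Iic t) = ENNReal.ofReal (if 0 ≤ t then 1 - rexp (-(r*t)) else 0) := by
  rw [expMeasure, gammaMeasure, withDensity_apply _ measurableSet_Iic]
  exact lintegral_exponentialPDF_eq_antiDeriv hr t

lemma expMeasure_Iio {r : ℝ} (hr : 0 < r) (t : ℝ) :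
    expMeasure r (Set.Iio t) = ENNReal.ofReal (if 0 ≤ t then 1 - rexp (-(r*t)) else 0) := by
  rw [← expMeasure_Iic hr t]
  exact measure_congr (Iio_ae_eq_Iic'
    ((withDensity_absolutelyContinuous _ _) (measure_singleton t)))

lemma expMeasure_Ici {r : ℝ} (hr : 0 < r) {a : ℝ} (ha : 0 ≤ a) :
    expMeasure r (Set.Ici a) = ENNReal.ofReal (rexp (-(r*a))) := by
  have : IsProbabilityMeasure (expMeasure r) := isProbabilityMeasure_expMeasure hr
  have h1 : rexp (-(r*a)) ≤ 1 := exp_le_one_iff.2 (by nlinarith)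
  rw [← Set.compl_Iio, measure_compl measurableSet_Iio (measure_ne_top _ _),
    expMeasure_Iio hr, if_pos ha, measure_univ,
    ← ENNReal.ofReal_one, ← ENNReal.ofReal_sub _ (by linarith)]
  ring_nf

noncomputable def pieceMap (a : ℝ) (p : ℝ × ℝ) : ℝ := if a ≤ p.1 then a + p.2 else p.1

lemma pieceMap_of_le {a : ℝ} {p : ℝ × ℝ} (h : a ≤ p.1) : pieceMap a p = a + p.2 := if_pos h

lemma pieceMap_of_lt {a : ℝ} {p : ℝ × ℝ} (h : p.1 < a) : pieceMap a p = p.1 := if_neg (not_le.2 h)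

lemma measurable_piece (a : ℝ) :
    Measurable (pieceMap a) :=
  Measurable.ite (measurableSet_le measurable_const measurable_fst)
    (measurable_const.add measurable_snd) measurable_fst

lemma piece_measurePreserving {r : ℝ} (hr : 0 < r) {a : ℝ} (ha : 0 ≤ a) :
    MeasurePreserving (pieceMap a)
      ((expMeasure r).prod (expMeasure r)) (expMeasure r) := by
  have : IsProbabilityMeasure (expMeasure r) := isProbabilityMeasure_expMeasure hr
  refine ⟨measurable_piece a, ?_⟩
  have : IsProbabilityMeasure
      (((expMeasure r).prod (expMeasure r)).map (pieceMap a)) :=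
    Measure.isProbabilityMeasure_map (measurable_piece a).aemeasurable
  refine Measure.ext_of_Iic _ _ (fun t => ?_)
  rw [Measure.map_apply (measurable_piece a) measurableSet_Iic]
  have hset : pieceMap a ⁻¹' Set.Iic t
      = (Set.Ici a ×ˢ Set.Iic (t - a)) ∪ ((Set.Iio a ∩ Set.Iic t) ×ˢ Set.univ) := by
    ext ⟨x, z⟩
    simp only [pieceMap, Set.mem_preimage, Set.mem_Iic, Set.mem_union, Set.mem_prod, Set.mem_Ici,
      Set.mem_Iio, Set.mem_inter_iff, Set.mem_univ, and_true]
    by_cases h : a ≤ x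
    · rw [if_pos h]
      constructor
      · intro hh; exact Or.inl ⟨h, by linarith⟩
      · rintro (⟨-, hz⟩ | ⟨hx, -⟩)
        · linarith
        · linarith
    · rw [if_neg h]
      constructor
      · intro hh; exact Or.inr ⟨not_le.1 h, hh⟩
      · rintro (⟨hx, -⟩ | ⟨-, hx⟩)
        · exact absurd hx h
        · exact hx
  rw [hset, measure_union, Measure.prod_prod, Measure.prod_prod, measure_univ, mul_one]
  · by_cases h1 : a ≤ t
    · have h2 : Set.Iio a ∩ Set.Iic t = Set.Iio a := by
        apply Set.inter_eq_self_of_subset_left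
        exact fun x hx => le_trans (le_of_lt hx) h1
      rw [h2, expMeasure_Ici hr ha, expMeasure_Iic hr, expMeasure_Iio hr, expMeasure_Iic hr,
        if_pos (by linarith : (0:ℝ) ≤ t - a), if_pos ha, if_pos (by linarith : (0:ℝ) ≤ t)]
      have he : rexp (-(r*a)) * rexp (-(r*(t-a))) = rexp (-(r*t)) := by
        rw [← Real.exp_add]; ring_nf
      have h3 : rexp (-(r*(t-a))) ≤ 1 := exp_le_one_iff.2 (by nlinarith)
      rw [← ENNReal.ofReal_mul (exp_nonneg _), ← ENNReal.ofReal_add (mul_nonneg (exp_nonneg _) (by linarith))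
        (by nlinarith [exp_le_one_iff.2 (show -(r*a) ≤ 0 by nlinarith)])]
      congr 1
      nlinarith [he]
    · have h2 : Set.Iio a ∩ Set.Iic t = Set.Iic t := by
        apply Set.inter_eq_self_of_subset_right
        exact fun x hx => lt_of_le_of_lt hx (not_le.1 h1)
      rw [h2, expMeasure_Iic hr, if_neg (by linarith : ¬ (0:ℝ) ≤ t - a),
        ENNReal.ofReal_zero, mul_zero, zero_add, expMeasure_Iic hr]
  · rw [Set.disjoint_left]
    rintro ⟨x, z⟩ hp hq
    simp only [Set.mem_prod, Set.mem_Ici, Set.mem_Iio, Set.mem_inter_iff] at hp hq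
    linarith [hp.1, hq.1.1]
  · exact ((measurableSet_Iio.inter measurableSet_Iic).prod MeasurableSet.univ)

/-- **Algorithm B = report noisy max with exponential noise.**
For every outcome `i : Fin k`, the probability that Algorithm B (with scores `q`, rate `lam`)
outputs `i` — i.e. that (for i.i.d. `X j ~ Expo(lam)` and, independently, i.i.d.
`Z j ~ Expo(lam)`) `i` belongs to `S' = {j | q j + X j ≥ q*}` and `Z i` is the (a.s. unique)
maximum of `Z` over `S'` — equals the probability that `i` is the (a.s. unique) maximizer of
`q j + X j` for i.i.d. `X j ~ Expo(lam)`. -/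
theorem algorithmB_eq_reportNoisyMax
    (k : ℕ) (q : Fin k → ℝ) (lam : ℝ) (hlam : 0 < lam)
    (qstar : ℝ) (hqstar : IsGreatest (Set.range q) qstar) :
    ∀ i : Fin k,
      ((Measure.pi fun _ : Fin k => expMeasure lam).prod
          (Measure.pi fun _ : Fin k => expMeasure lam))
        {w | qstar ≤ q i + w.1 i ∧
          ∀ j : Fin k, j ≠ i → qstar ≤ q j + w.1 j → w.2 j < w.2 i}
      = (Measure.pi fun _ : Fin k => expMeasure lam)
          {x | ∀ j : Fin k, j ≠ i → q j + x j < q i + x i} := by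
  intro i
  have hprob : IsProbabilityMeasure (expMeasure lam) := isProbabilityMeasure_expMeasure hlam
  obtain ⟨⟨j₀, hj₀⟩, hq_ub⟩ := hqstar
  have ha : ∀ j, 0 ≤ qstar - q j := fun j => sub_nonneg.2 (hq_ub ⟨j, rfl⟩)
  set μ := Measure.pi fun _ : Fin k => expMeasure lam with hμ
  set F : ((Fin k → ℝ) × (Fin k → ℝ)) → (Fin k → ℝ) :=
    fun w j => pieceMap (qstar - q j) (w.1 j, w.2 j) with hFdef
  have hE := (measurePreserving_arrowProdEquivProdArrow ℝ ℝ (Fin k)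
      (fun _ => expMeasure lam) (fun _ => expMeasure lam)).symm
      (MeasurableEquiv.arrowProdEquivProdArrow ℝ ℝ (Fin k))
  have hPi := measurePreserving_pi (fun _ : Fin k => (expMeasure lam).prod (expMeasure lam))
      (fun _ : Fin k => expMeasure lam)
      (fun j => piece_measurePreserving hlam (ha j))
  have hF : MeasurePreserving F (μ.prod μ) μ := by
    have := hPi.comp hE
    convert this using 1
    rfl
  have hB : MeasurableSet {x : Fin k → ℝ | ∀ j : Fin k, j ≠ i → q j + x j < q i + x i} := by
    rw [Set.setOf_forall]
    refine MeasurableSet.iInter fun j => ?_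
    by_cases hj : j = i
    · simp [hj]
    · simp only [hj, ne_eq, not_false_iff, true_implies]
      exact measurableSet_lt (measurable_const.add (measurable_pi_apply j))
        (measurable_const.add (measurable_pi_apply i))
  have hN : μ {x : Fin k → ℝ | ¬ ∀ j, 0 ≤ x j} = 0 := by
    have hsub : {x : Fin k → ℝ | ¬ ∀ j, 0 ≤ x j} ⊆ ⋃ j, Function.eval j ⁻¹' Set.Iio 0 := by
      intro x hx
      push_neg at hx
      obtain ⟨j, hj⟩ := hx
      exact Set.mem_iUnion.2 ⟨j, hj⟩
    refine measure_mono_null hsub (measure_iUnion_null fun j =>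
      Measure.pi_eval_preimage_null _ ?_)
    rw [expMeasure_Iio hlam]
    simp
  have h1 : ∀ᵐ w ∂(μ.prod μ), ∀ j, 0 ≤ w.1 j := by
    rw [MeasureTheory.ae_iff]
    have hs : {w : (Fin k → ℝ) × (Fin k → ℝ) | ¬ ∀ j, 0 ≤ w.1 j}
        = {x : Fin k → ℝ | ¬ ∀ j, 0 ≤ x j} ×ˢ Set.univ := by
      ext w; simp [Set.mem_prod]
    rw [hs, Measure.prod_prod, hN, zero_mul]
  have h2 : ∀ᵐ w ∂(μ.prod μ), ∀ j, 0 ≤ w.2 j := by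
    rw [MeasureTheory.ae_iff]
    have hs : {w : (Fin k → ℝ) × (Fin k → ℝ) | ¬ ∀ j, 0 ≤ w.2 j}
        = Set.univ ×ˢ {x : Fin k → ℝ | ¬ ∀ j, 0 ≤ x j} := by
      ext w; simp [Set.mem_prod]
    rw [hs, Measure.prod_prod, hN, mul_zero]
  have hAE : {w : (Fin k → ℝ) × (Fin k → ℝ) | qstar ≤ q i + w.1 i ∧
        ∀ j : Fin k, j ≠ i → qstar ≤ q j + w.1 j → w.2 j < w.2 i}
      =ᵐ[μ.prod μ] F ⁻¹' {x | ∀ j : Fin k, j ≠ i → q j + x j < q i + x i} := by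
    filter_upwards [h1, h2] with w hw1 hw2
    rw [eq_iff_iff]
    constructor
    · rintro ⟨hi, hmax⟩ j hj
      have hii : qstar - q i ≤ w.1 i := by linarith
      have hFi : F w i = (qstar - q i) + w.2 i := pieceMap_of_le hii
      by_cases hjS : qstar - q j ≤ w.1 j
      · have hFj : F w j = (qstar - q j) + w.2 j := pieceMap_of_le hjS
        have := hmax j hj (by linarith)
        show q j + F w j < q i + F w i
        rw [hFi, hFj]
        linarith
      · push_neg at hjS
        have hFj : F w j = w.1 j := pieceMap_of_lt hjS
        show q j + F w j < q i + F w i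
        rw [hFi, hFj]
        linarith [hw2 i]
    · intro h
      have hQi : qstar - q i ≤ w.1 i := by
        by_contra hc
        push_neg at hc
        have hFi : F w i = w.1 i := pieceMap_of_lt hc
        by_cases hji : j₀ = i
        · have hqi : q i = qstar := by rw [← hji, hj₀]
          linarith [hw1 i, ha i]
        · have hj0le : qstar - q j₀ ≤ w.1 j₀ := by
            rw [hj₀]; simpa using hw1 j₀
          have hFj0 : F w j₀ = (qstar - q j₀) + w.2 j₀ := pieceMap_of_le hj0le
          have hlt := h j₀ hji
          rw [hFi, hFj0] at hlt
          linarith [hw2 j₀]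
      have hFi : F w i = (qstar - q i) + w.2 i := pieceMap_of_le hQi
      refine ⟨by linarith, fun j hj hjq => ?_⟩
      have hFj : F w j = (qstar - q j) + w.2 j := pieceMap_of_le (by linarith)
      have hlt := h j hj
      rw [hFi, hFj] at hlt
      linarith
  calc (μ.prod μ) {w | qstar ≤ q i + w.1 i ∧
        ∀ j : Fin k, j ≠ i → qstar ≤ q j + w.1 j → w.2 j < w.2 i}
      = (μ.prod μ) (F ⁻¹' {x | ∀ j : Fin k, j ≠ i → q j + x j < q i + x i}) :=
        measure_congr hAE
    _ = μ {x | ∀ j : Fin k, j ≠ i → q j + x j < q i + x i} :=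
        hF.measure_preimage hB.nullMeasurableSet
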